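/- For the power functions p_k(λ) = const + ∑_i[(λ_i-i+1/2)^k - (-i+1/2)^k] (with constant (1-2^{-k})ζ(-k)), one has p_k(λ') = (-1)^{k+1} p_k(λ) for every partition λ, where λ' is the conjugate partition. -/

import Mathlib

/-- `ζ(-k) = (-1)^k B_{k+1}/(k+1)`. -/
noncomputable def zetaNeg (k : ℕ) : ℝ := (-1) ^ k * (bernoulli (k + 1) : ℝ) / (k + 1)

/-- `p_k(λ) = (1-2^{-k})ζ(-k) + ∑_i [(λ_i-i+1/2)^k - (-i+1/2)^k]`,
summed over `i ≤ N` for any `N` beyond which all terms vanish. -/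
noncomputable def ppow (k : ℕ) (lam : ℕ → ℕ) (N : ℕ) : ℝ :=
  (1 - ((2 : ℝ) ^ k)⁻¹) * zetaNeg k +
    ∑ n ∈ Finset.range N, (((lam n : ℝ) - n - 1 / 2) ^ k - (-(n : ℝ) - 1 / 2) ^ k)

/-- The conjugate partition: `λ'_{n+1} = #{m : λ_{m+1} > n}`. -/
noncomputable def conjP (lam : ℕ → ℕ) : ℕ → ℕ := fun n => Set.ncard {m : ℕ | n < lam m}

lemma conjP_lt_iff (lam : ℕ → ℕ) (hA : Antitone lam) (N : ℕ)
    (hN : ∀ i, N ≤ i → lam i = 0) (n j : ℕ) :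
    j < conjP lam n ↔ n < lam j := by
  have hex : ∃ m, lam m ≤ n := ⟨N, by simp [hN N le_rfl]⟩
  have hset : {m : ℕ | n < lam m} = Set.Iio (Nat.find hex) := by
    ext m
    simp only [Set.mem_setOf_eq, Set.mem_Iio]
    constructor
    · intro h
      by_contra hle
      push_neg at hle
      have := (hA hle).trans (Nat.find_spec hex)
      omega
    · intro h
      have := Nat.find_min hex h
      omega
  have hc : conjP lam n = Nat.find hex := by
    show Set.ncard {m : ℕ | n < lam m} = Nat.find hex
    rw [hset, ← Finset.coe_range, Set.ncard_coe_finset, Finset.card_range]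
  rw [hc]
  constructor
  · intro h
    have := Nat.find_min hex h
    omega
  · intro h
    by_contra hle
    push_neg at hle
    have := (hA hle).trans (Nat.find_spec hex)
    omega

lemma tele (k m n : ℕ) :
    ∑ j ∈ Finset.range m, (((j : ℝ) - n + 1 / 2) ^ k - ((j : ℝ) - n - 1 / 2) ^ k)
      = ((m : ℝ) - n - 1 / 2) ^ k - (-(n : ℝ) - 1 / 2) ^ k := by
  have h := Finset.sum_range_sub (f := fun j : ℕ => ((j : ℝ) - n - 1 / 2) ^ k) m
  have h2 : ∑ j ∈ Finset.range m, (((j : ℝ) - n + 1 / 2) ^ k - ((j : ℝ) - n - 1 / 2) ^ k)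
      = ∑ j ∈ Finset.range m,
        ((fun j : ℕ => ((j : ℝ) - n - 1 / 2) ^ k) (j + 1)
          - (fun j : ℕ => ((j : ℝ) - n - 1 / 2) ^ k) j) := by
    refine Finset.sum_congr rfl fun j _ => ?_
    push_cast
    ring_nf
  rw [h2, h]
  norm_num

lemma range_filter_eq' (c B : ℕ) (h : c ≤ B) :
    (Finset.range B).filter (fun j => j < c) = Finset.range c := by
  ext j
  simp only [Finset.mem_filter, Finset.mem_range]
  omega

/-- `p_k(λ') = (-1)^{k+1} p_k(λ)`. -/
theorem stmt15 (k : ℕ) (hk : 1 ≤ k) (lam : ℕ → ℕ) (hA : Antitone lam)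
    (N M : ℕ) (hN : ∀ i, N ≤ i → lam i = 0) (hM : ∀ i, M ≤ i → conjP lam i = 0) :
    ppow k (conjP lam) M = (-1) ^ (k + 1) * ppow k lam N := by
  have hiff : ∀ n j, j < conjP lam n ↔ n < lam j := conjP_lt_iff lam hA N hN
  have hlamM : ∀ j, lam j ≤ M := by
    intro j
    by_contra h
    push_neg at h
    have : j < conjP lam M := (hiff M j).2 h
    rw [hM M le_rfl] at this
    omega
  have hconjN : ∀ n, conjP lam n ≤ N := by
    intro n
    by_contra h
    push_neg at h
    have : n < lam N := (hiff n N).1 h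
    rw [hN N le_rfl] at this
    omega
  have hL : ∑ n ∈ Finset.range M, (((conjP lam n : ℝ) - n - 1 / 2) ^ k - (-(n : ℝ) - 1 / 2) ^ k)
      = ∑ j ∈ Finset.range N, ∑ n ∈ Finset.range (lam j),
          (((j : ℝ) - n + 1 / 2) ^ k - ((j : ℝ) - n - 1 / 2) ^ k) := by
    calc ∑ n ∈ Finset.range M, (((conjP lam n : ℝ) - n - 1 / 2) ^ k - (-(n : ℝ) - 1 / 2) ^ k)
        = ∑ n ∈ Finset.range M, ∑ j ∈ Finset.range (conjP lam n),
            (((j : ℝ) - n + 1 / 2) ^ k - ((j : ℝ) - n - 1 / 2) ^ k) :=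
          Finset.sum_congr rfl fun n _ => (tele k (conjP lam n) n).symm
      _ = ∑ n ∈ Finset.range M, ∑ j ∈ Finset.range N,
            (if j < conjP lam n then ((j : ℝ) - n + 1 / 2) ^ k - ((j : ℝ) - n - 1 / 2) ^ k
              else 0) := by
          refine Finset.sum_congr rfl fun n _ => ?_
          rw [← range_filter_eq' (conjP lam n) N (hconjN n), Finset.sum_filter]
      _ = ∑ j ∈ Finset.range N, ∑ n ∈ Finset.range M,
            (if j < conjP lam n then ((j : ℝ) - n + 1 / 2) ^ k - ((j : ℝ) - n - 1 / 2) ^ k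
              else 0) := Finset.sum_comm
      _ = ∑ j ∈ Finset.range N, ∑ n ∈ Finset.range M,
            (if n < lam j then ((j : ℝ) - n + 1 / 2) ^ k - ((j : ℝ) - n - 1 / 2) ^ k
              else 0) :=
          Finset.sum_congr rfl fun j _ => Finset.sum_congr rfl fun n _ =>
            if_congr (hiff n j) rfl rfl
      _ = ∑ j ∈ Finset.range N, ∑ n ∈ Finset.range (lam j),
            (((j : ℝ) - n + 1 / 2) ^ k - ((j : ℝ) - n - 1 / 2) ^ k) := by
          refine Finset.sum_congr rfl fun j _ => ?_
          rw [← range_filter_eq' (lam j) M (hlamM j), Finset.sum_filter]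
  have hR : ∑ n ∈ Finset.range N, (((lam n : ℝ) - n - 1 / 2) ^ k - (-(n : ℝ) - 1 / 2) ^ k)
      = ∑ j ∈ Finset.range N, ∑ n ∈ Finset.range (lam j),
          (((n : ℝ) - j + 1 / 2) ^ k - ((n : ℝ) - j - 1 / 2) ^ k) :=
    Finset.sum_congr rfl fun j _ => (tele k (lam j) j).symm
  have hsign : ∑ j ∈ Finset.range N, ∑ n ∈ Finset.range (lam j),
        (((j : ℝ) - n + 1 / 2) ^ k - ((j : ℝ) - n - 1 / 2) ^ k)
      = (-1) ^ (k + 1) * ∑ j ∈ Finset.range N, ∑ n ∈ Finset.range (lam j),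
          (((n : ℝ) - j + 1 / 2) ^ k - ((n : ℝ) - j - 1 / 2) ^ k) := by
    rw [Finset.mul_sum]
    refine Finset.sum_congr rfl fun j _ => ?_
    rw [Finset.mul_sum]
    refine Finset.sum_congr rfl fun n _ => ?_
    have e1 : ((j : ℝ) - n + 1 / 2) = -(((n : ℝ) - j - 1 / 2)) := by ring
    have e2 : ((j : ℝ) - n - 1 / 2) = -(((n : ℝ) - j + 1 / 2)) := by ring
    have hnp : ∀ a : ℝ, (-a) ^ k = (-1) ^ k * a ^ k := fun a => by rw [neg_pow]
    rw [e1, e2, hnp ((n : ℝ) - j - 1 / 2), hnp ((n : ℝ) - j + 1 / 2), pow_succ]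
    ring
  have hC : (1 - ((2 : ℝ) ^ k)⁻¹) * zetaNeg k
      = (-1) ^ (k + 1) * ((1 - ((2 : ℝ) ^ k)⁻¹) * zetaNeg k) := by
    rcases Nat.even_or_odd k with he | ho
    · have hb : bernoulli (k + 1) = 0 := by
        rw [bernoulli_eq_bernoulli'_of_ne_one (by omega)]
        exact bernoulli'_eq_zero_of_odd he.add_one (by omega)
      simp [zetaNeg, hb]
    · have h1 : (-1 : ℝ) ^ (k + 1) = 1 := (ho.add_one).neg_one_pow
      rw [h1, one_mul]
  rw [ppow, ppow, hL, hsign, hR, mul_add, ← hC]
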